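/- Let K be a perfect field, g ∈ K[x] an irreducible separable polynomial, and β a root of g in an algebraic closure of K. If f ∈ K[x] is separable and f - β factors into monic irreducibles as ∏ f_i over K(β), then g ∘ f factors into irreducibles over K as ∏ f_i' where each f_i' is irreducible of degree deg(f_i) · deg(g), and f_i' is the minimal polynomial over K of a root of f_i. -/

import Mathlib

open Polynomial IntermediateField

private lemma roots_finset_prod {F : Type*} [Field F] {ι : Type*} (s : Finset ι) (p : ι → F[X])
    (h : ∀ i ∈ s, p i ≠ 0) : (∏ i ∈ s, p i).roots = ∑ i ∈ s, (p i).roots := by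
  classical
  induction s using Finset.induction with
  | empty => simp
  | @insert a s ha ih =>
    rw [Finset.prod_insert ha, Finset.sum_insert ha, Polynomial.roots_mul
        (mul_ne_zero (h a (Finset.mem_insert_self a s))
          (Finset.prod_ne_zero_iff.mpr fun i hi => h i (Finset.mem_insert_of_mem hi))),
      ih (fun i hi => h i (Finset.mem_insert_of_mem hi))]

private lemma monic_eq_of_roots_eq {F : Type*} [Field F] [IsAlgClosed F] {p q : F[X]}
    (hp : p.Monic) (hq : q.Monic) (h : p.roots = q.roots) : p = q := by
  rw [(IsAlgClosed.splits p).eq_prod_roots_of_monic hp, h,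
    ← (IsAlgClosed.splits q).eq_prod_roots_of_monic hq]

/-- factorization of `g ∘ f` over `K` from the factorization of
`f - β` over `K(β)`, for `g` irreducible separable with root `β`. -/
theorem stmt_0 {K : Type*} [Field K] [PerfectField K]
    (g f : Polynomial K) (hg : Irreducible g) (hgs : g.Separable) (hgm : g.Monic)
    (hfm : f.Monic) (hfs : f.Separable)
    (β : AlgebraicClosure K) (hβ : Polynomial.aeval β g = 0)
    {ι : Type*} [Fintype ι]
    (fi : ι → Polynomial K⟮β⟯)
    (hmono : ∀ i, (fi i).Monic) (hirr : ∀ i, Irreducible (fi i))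
    (hprod : ∏ i, fi i =
      Polynomial.map (algebraMap K K⟮β⟯) f - Polynomial.C (AdjoinSimple.gen K β))
    (α : ι → AlgebraicClosure K) (hα : ∀ i, Polynomial.aeval (α i) (fi i) = 0) :
    g.comp f = ∏ i, minpoly K (α i) ∧
      ∀ i, Irreducible (minpoly K (α i)) ∧
        (minpoly K (α i)).natDegree = (fi i).natDegree * g.natDegree := by
  classical
  have hβint : IsIntegral K β := Algebra.IsIntegral.isIntegral β
  have hgmin : g = minpoly K β := minpoly.eq_of_irreducible_of_monic hg hβ hgm
  haveI : FiniteDimensional K K⟮β⟯ := IntermediateField.adjoin.finiteDimensional hβint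
  set gen := IntermediateField.AdjoinSimple.gen K β with hgen_def
  have hgen0 : Polynomial.aeval gen g = 0 := by
    apply (algebraMap K⟮β⟯ (AlgebraicClosure K)).injective
    rw [map_zero, ← Polynomial.aeval_algebraMap_apply,
      IntermediateField.AdjoinSimple.algebraMap_gen]
    exact hβ
  by_cases hf0 : f.natDegree = 0
  · -- degenerate case : f = 1
    have hf1 : f = 1 := hfm.natDegree_eq_zero.mp hf0
    haveI : IsEmpty ι := by
      constructor
      intro i
      have hne : (∏ j, fi j) ≠ 0 := Finset.prod_ne_zero_iff.mpr fun j _ => (hirr j).ne_zero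
      have hdeg : (∏ j, fi j).natDegree = 0 := by
        rw [hprod, hf1, Polynomial.map_one, ← Polynomial.C_1, ← Polynomial.C_sub,
          Polynomial.natDegree_C]
      have hle : (fi i).natDegree = 0 := by
        have := Polynomial.natDegree_le_of_dvd (Finset.dvd_prod_of_mem fi (Finset.mem_univ i)) hne
        omega
      exact (hirr i).not_isUnit (((hmono i).natDegree_eq_zero.mp hle) ▸ isUnit_one)
    have huniv : (Finset.univ : Finset ι) = ∅ := Finset.univ_eq_empty
    have h1 : (1 : Polynomial K⟮β⟯) = 1 - Polynomial.C gen := by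
      have h1' : (1 : Polynomial K⟮β⟯) = Polynomial.map (algebraMap K K⟮β⟯) f - Polynomial.C gen := by
        rw [← hprod, huniv, Finset.prod_empty]
      rwa [hf1, Polynomial.map_one] at h1'
    have hCgen : (Polynomial.C gen : Polynomial K⟮β⟯) = 0 := by
      rw [← sub_sub_cancel 1 (Polynomial.C gen), ← h1, sub_self]
    have hgen_zero : gen = 0 := Polynomial.C_eq_zero.mp hCgen
    have hβ0 : β = 0 := by
      rw [← IntermediateField.AdjoinSimple.algebraMap_gen K β, ← hgen_def, hgen_zero, map_zero]
    have hgX : g = X := by rw [hgmin, hβ0, minpoly.zero]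
    constructor
    · rw [huniv, Finset.prod_empty, hf1, hgX, Polynomial.X_comp]
    · exact fun i => isEmptyElim i
  · -- main case
    have hcomp_alg : ∀ ψ : K⟮β⟯ →ₐ[K] AlgebraicClosure K,
        ψ.toRingHom.comp (algebraMap K K⟮β⟯) = algebraMap K (AlgebraicClosure K) :=
      fun ψ => RingHom.ext fun x => ψ.commutes x
    have haint : ∀ i, IsIntegral K (α i) := fun i => Algebra.IsIntegral.isIntegral _
    have hirred : ∀ i, Irreducible (minpoly K (α i)) := fun i => minpoly.irreducible (haint i)
    have hmin0 : ∀ i, minpoly K (α i) ≠ 0 := fun i => minpoly.ne_zero (haint i)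
    have hminmap0 : ∀ i,
        Polynomial.map (algebraMap K (AlgebraicClosure K)) (minpoly K (α i)) ≠ 0 :=
      fun i => Polynomial.map_ne_zero (hmin0 i)
    have hfi_min : ∀ i, fi i = minpoly K⟮β⟯ (α i) :=
      fun i => minpoly.eq_of_irreducible_of_monic (hirr i) (hα i) (hmono i)
    have hdvd : ∀ i (ψ : K⟮β⟯ →ₐ[K] AlgebraicClosure K),
        Polynomial.map ψ.toRingHom (fi i) ∣
          Polynomial.map (algebraMap K (AlgebraicClosure K)) (minpoly K (α i)) := by
      intro i ψ
      have h1 : fi i ∣ Polynomial.map (algebraMap K K⟮β⟯) (minpoly K (α i)) := by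
        rw [hfi_min i]; exact minpoly.dvd_map_of_isScalarTower K K⟮β⟯ (α i)
      have h2 := Polynomial.map_dvd ψ.toRingHom h1
      rwa [Polynomial.map_map, hcomp_alg ψ] at h2
    have hfiψdvd : ∀ i (ψ : K⟮β⟯ →ₐ[K] AlgebraicClosure K),
        Polynomial.map ψ.toRingHom (fi i) ∣
          Polynomial.map (algebraMap K (AlgebraicClosure K)) f - Polynomial.C (ψ gen) := by
      intro i ψ
      have h1 : fi i ∣ Polynomial.map (algebraMap K K⟮β⟯) f - Polynomial.C gen :=
        hprod ▸ Finset.dvd_prod_of_mem fi (Finset.mem_univ i)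
      have h2 := Polynomial.map_dvd ψ.toRingHom h1
      rwa [Polynomial.map_sub, Polynomial.map_map, hcomp_alg ψ, Polynomial.map_C] at h2
    have heval : ∀ i (ψ : K⟮β⟯ →ₐ[K] AlgebraicClosure K) (γ : AlgebraicClosure K),
        γ ∈ (Polynomial.map ψ.toRingHom (fi i)).roots →
        Polynomial.eval γ (Polynomial.map (algebraMap K (AlgebraicClosure K)) f) = ψ gen := by
      intro i ψ γ hγ
      obtain ⟨c, hc⟩ := hfiψdvd i ψ
      have h0 : Polynomial.eval γ
          (Polynomial.map (algebraMap K (AlgebraicClosure K)) f - Polynomial.C (ψ gen)) = 0 := by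
        rw [hc, Polynomial.eval_mul, (Polynomial.mem_roots'.mp hγ).2, zero_mul]
      rw [Polynomial.eval_sub, Polynomial.eval_C, sub_eq_zero] at h0
      exact h0
    have hinj : Function.Injective
        (fun ψ : K⟮β⟯ →ₐ[K] AlgebraicClosure K => ψ gen) := by
      intro ψ ψ' h
      apply (IntermediateField.adjoin.powerBasis hβint).algHom_ext
      rw [IntermediateField.adjoin.powerBasis_gen]
      exact h
    -- Lemma D
    have keyD : ∀ i,
        (Polynomial.map (algebraMap K (AlgebraicClosure K)) (minpoly K (α i))).roots
          = ∑ ψ : K⟮β⟯ →ₐ[K] AlgebraicClosure K, (Polynomial.map ψ.toRingHom (fi i)).roots := by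
      intro i
      have hsep : (minpoly K (α i)).Separable :=
        PerfectField.separable_of_irreducible (hirred i)
      have hnodup :
          (Polynomial.map (algebraMap K (AlgebraicClosure K)) (minpoly K (α i))).roots.Nodup :=
        Polynomial.nodup_roots hsep.map
      apply le_antisymm
      · rw [Multiset.le_iff_count]
        intro γ
        by_cases hγ : γ ∈ (Polynomial.map (algebraMap K (AlgebraicClosure K))
            (minpoly K (α i))).roots
        · refine le_trans (Multiset.nodup_iff_count_le_one.mp hnodup γ) ?_
          rw [Multiset.one_le_count_iff_mem, Multiset.mem_sum]
          have hγ' : γ ∈ (minpoly K (α i)).aroots (AlgebraicClosure K) := by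
            rwa [Polynomial.aroots_def]
          set τ := (IntermediateField.algHomAdjoinIntegralEquiv K (haint i)).symm ⟨γ, hγ'⟩
            with hτdef
          have hτ : τ (AdjoinSimple.gen K (α i)) = γ :=
            IntermediateField.algHomAdjoinIntegralEquiv_symm_apply_gen K (haint i) _
          have hfa : Polynomial.aeval (α i) f = β := by
            have h1 : Polynomial.aeval (α i) (∏ j, fi j) = 0 := by
              rw [map_prod]
              exact Finset.prod_eq_zero (Finset.mem_univ i) (hα i)
            rw [hprod, map_sub, Polynomial.aeval_C, Polynomial.aeval_map_algebraMap,
              sub_eq_zero, IntermediateField.AdjoinSimple.algebraMap_gen] at h1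
            exact h1
          have hβmem : β ∈ K⟮α i⟯ := by
            rw [← hfa]
            exact IntermediateField.algebra_adjoin_le_adjoin K {α i}
              ((Algebra.adjoin_singleton_eq_range_aeval K (α i)).symm ▸ Set.mem_range_self f)
          have hle : K⟮β⟯ ≤ K⟮α i⟯ := IntermediateField.adjoin_simple_le_iff.mpr hβmem
          refine ⟨τ.comp (IntermediateField.inclusion hle), Finset.mem_univ _, ?_⟩
          have hcomp : (algebraMap (K⟮α i⟯) (AlgebraicClosure K)).comp
              (IntermediateField.inclusion hle).toRingHom = algebraMap K⟮β⟯ (AlgebraicClosure K) := by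
            ext x; rfl
          have h0 : Polynomial.eval (AdjoinSimple.gen K (α i))
              (Polynomial.map (IntermediateField.inclusion hle).toRingHom (fi i)) = 0 := by
            apply (algebraMap (K⟮α i⟯) (AlgebraicClosure K)).injective
            rw [map_zero, ← Polynomial.eval₂_at_apply, ← Polynomial.eval_map,
              Polynomial.map_map, hcomp, IntermediateField.AdjoinSimple.algebraMap_gen,
              Polynomial.eval_map, ← Polynomial.aeval_def]
            exact hα i
          rw [Polynomial.mem_roots']
          refine ⟨Polynomial.map_ne_zero (hmono i).ne_zero, ?_⟩
          have hmm : Polynomial.map (τ.comp (IntermediateField.inclusion hle)).toRingHom (fi i)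
              = Polynomial.map τ.toRingHom
                (Polynomial.map (IntermediateField.inclusion hle).toRingHom (fi i)) := by
            rw [Polynomial.map_map]; rfl
          rw [Polynomial.IsRoot, hmm, ← hτ, Polynomial.eval_map,
            show τ (AdjoinSimple.gen K (α i))
              = τ.toRingHom (AdjoinSimple.gen K (α i)) from rfl,
            Polynomial.eval₂_at_apply, h0, map_zero]
        · rw [Multiset.count_eq_zero_of_notMem hγ]
          exact Nat.zero_le _
      · rw [Multiset.le_iff_count]
        intro γ
        rw [Multiset.count_sum']
        by_cases hex : ∃ ψ : K⟮β⟯ →ₐ[K] AlgebraicClosure K,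
            γ ∈ (Polynomial.map ψ.toRingHom (fi i)).roots
        · obtain ⟨ψ₀, hψ₀⟩ := hex
          rw [Finset.sum_eq_single ψ₀]
          · exact Multiset.count_le_of_le γ
              (Polynomial.roots.le_of_dvd (hminmap0 i) (hdvd i ψ₀))
          · intro ψ _ hne
            rw [Multiset.count_eq_zero]
            intro hmem
            exact hne (hinj ((heval i ψ γ hmem).symm.trans (heval i ψ₀ γ hψ₀)))
          · intro h; exact absurd (Finset.mem_univ ψ₀) h
        · rw [Finset.sum_eq_zero fun ψ _ => Multiset.count_eq_zero.mpr fun hmem => hex ⟨ψ, hmem⟩]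
          exact Nat.zero_le _
    -- degrees
    have hcardhom : Fintype.card (K⟮β⟯ →ₐ[K] AlgebraicClosure K) = g.natDegree := by
      rw [AlgHom.card, IntermediateField.adjoin.finrank hβint, ← hgmin]
    have hdeg : ∀ i, (minpoly K (α i)).natDegree = (fi i).natDegree * g.natDegree := by
      intro i
      rw [← Polynomial.natDegree_map (p := minpoly K (α i)) (algebraMap K (AlgebraicClosure K)),
          (IsAlgClosed.splits ((minpoly K (α i)).map (algebraMap K (AlgebraicClosure K)))).natDegree_eq_card_roots,
        keyD i, Multiset.card_sum _ _]
      rw [Finset.sum_congr rfl fun ψ _ =>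
        (by rw [← Polynomial.natDegree_map (p := fi i) ψ.toRingHom]
            exact (IsAlgClosed.splits _).natDegree_eq_card_roots :
          (fi i).natDegree = (Polynomial.map ψ.toRingHom (fi i)).roots.card).symm]
      rw [Finset.sum_const, Finset.card_univ, hcardhom, smul_eq_mul, mul_comm]
    -- roots of map g
    have hGroots : (Polynomial.map (algebraMap K (AlgebraicClosure K)) g).roots
        = Multiset.map (fun ψ : K⟮β⟯ →ₐ[K] AlgebraicClosure K => ψ gen)
            Finset.univ.val := by
      refine (Multiset.Nodup.ext (Polynomial.nodup_roots hgs.map)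
        (Multiset.Nodup.map hinj Finset.univ.nodup)).mpr ?_
      intro b
      constructor
      · intro hb
        have hb' : b ∈ (minpoly K β).aroots (AlgebraicClosure K) := by
          rw [Polynomial.aroots_def, ← hgmin]; exact hb
        exact Multiset.mem_map.mpr
          ⟨(IntermediateField.algHomAdjoinIntegralEquiv K hβint).symm ⟨b, hb'⟩,
            Finset.mem_val.mpr (Finset.mem_univ _),
            IntermediateField.algHomAdjoinIntegralEquiv_symm_apply_gen K hβint _⟩
      · intro hb
        obtain ⟨ψ, -, rfl⟩ := Multiset.mem_map.mp hb
        rw [Polynomial.mem_roots', Polynomial.IsRoot, Polynomial.eval_map,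
          ← Polynomial.aeval_def]
        exact ⟨Polynomial.map_ne_zero hgm.ne_zero, by
          rw [Polynomial.aeval_algHom_apply, hgen0, map_zero]⟩
    -- per-ψ factorization of f - ψ(β)
    have hψfact : ∀ ψ : K⟮β⟯ →ₐ[K] AlgebraicClosure K,
        Polynomial.map (algebraMap K (AlgebraicClosure K)) f - Polynomial.C (ψ gen)
          = ∏ i, Polynomial.map ψ.toRingHom (fi i) := by
      intro ψ
      rw [← Polynomial.map_prod, hprod, Polynomial.map_sub, Polynomial.map_map,
        hcomp_alg ψ, Polynomial.map_C]
      rfl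
    -- the big product identity over the algebraic closure
    have hLHS : Polynomial.map (algebraMap K (AlgebraicClosure K)) (g.comp f)
        = ∏ ψ : K⟮β⟯ →ₐ[K] AlgebraicClosure K, ∏ i, Polynomial.map ψ.toRingHom (fi i) := by
      rw [Polynomial.map_comp,
        (IsAlgClosed.splits _).eq_prod_roots_of_monic (hgm.map (algebraMap K (AlgebraicClosure K))),
        hGroots, Multiset.map_map, Polynomial.multiset_prod_comp, Multiset.map_map,
        Finset.prod_eq_multiset_prod]
      apply congrArg Multiset.prod
      apply Multiset.map_congr rfl
      intro ψ _
      simp only [Function.comp_apply, Polynomial.sub_comp, Polynomial.X_comp, Polynomial.C_comp]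
      exact hψfact ψ
    have hroots_eq : (Polynomial.map (algebraMap K (AlgebraicClosure K)) (g.comp f)).roots
        = (Polynomial.map (algebraMap K (AlgebraicClosure K)) (∏ i, minpoly K (α i))).roots := by
      rw [hLHS, Polynomial.map_prod]
      rw [roots_finset_prod _ _ (fun ψ _ => Finset.prod_ne_zero_iff.mpr
        (fun i _ => Polynomial.map_ne_zero (hmono i).ne_zero)),
        roots_finset_prod _ _ (fun i _ => hminmap0 i)]
      rw [Finset.sum_congr rfl fun ψ _ => roots_finset_prod _ _
        (fun i _ => Polynomial.map_ne_zero (hmono i).ne_zero)]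
      rw [Finset.sum_comm]
      exact Finset.sum_congr rfl fun i _ => (keyD i).symm
    have hmonicL : (Polynomial.map (algebraMap K (AlgebraicClosure K)) (g.comp f)).Monic :=
      (hgm.comp hfm hf0).map _
    have hmonicR :
        (Polynomial.map (algebraMap K (AlgebraicClosure K)) (∏ i, minpoly K (α i))).Monic :=
      (Polynomial.monic_prod_of_monic _ _ fun i _ => minpoly.monic (haint i)).map _
    have hmain : g.comp f = ∏ i, minpoly K (α i) :=
      Polynomial.map_injective _ (algebraMap K (AlgebraicClosure K)).injective
        (monic_eq_of_roots_eq hmonicL hmonicR hroots_eq)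
    exact ⟨hmain, fun i => ⟨hirred i, hdeg i⟩⟩
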